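/- Let A be a prime commutative differential algebra over a field k of characteristic zero with nonzero derivation. Then for any nonzero multilinear differential polynomial p ∈ A{x1, …, xn} there exist a1, …, an ∈ A such that p(a1, …, an) ≠ 0. -/

import Mathlib

open MvPolynomial

/-- An ideal of a differential ring is a differential ideal if it is closed under
the derivation. -/
def IsDifferentialIdeal {A : Type*} [Ring A] (D : A → A) (I : Ideal A) : Prop :=
  ∀ a ∈ I, D a ∈ I

/-- A differential ring is prime if the product of any two nonzero differential
ideals is nonzero. -/
def IsPrimeDifferentialRing {A : Type*} [Ring A] (D : A → A) : Prop :=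
  ∀ I J : Ideal A, IsDifferentialIdeal D I → IsDifferentialIdeal D J →
    I ≠ ⊥ → J ≠ ⊥ → I * J ≠ ⊥

set_option linter.unusedSectionVars false

section Aux

variable {k A : Type*} [Field k] [CharZero k] [CommRing A] [Algebra k A]
variable {D : A → A}

lemma D_zero (hDlin : IsLinearMap k D) : D 0 = 0 := by
  simpa using hDlin.map_add 0 0

lemma D_sum (hDlin : IsLinearMap k D) {ι : Type*} (s : Finset ι) (f : ι → A) :
    D (∑ i ∈ s, f i) = ∑ i ∈ s, D (f i) := by
  classical
  induction s using Finset.induction with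
  | empty => simpa using D_zero hDlin
  | insert _ _ h ih => rw [Finset.sum_insert h, Finset.sum_insert h, hDlin.map_add, ih]

lemma D_nsmul (hDlin : IsLinearMap k D) (m : ℕ) (a : A) : D (m • a) = m • D a := by
  induction m with
  | zero => simpa using D_zero hDlin
  | succ m ih => rw [succ_nsmul, succ_nsmul, hDlin.map_add, ih]

lemma iter_leibniz (hDlin : IsLinearMap k D)
    (hLeib : ∀ a b : A, D (a * b) = a * D b + D a * b) (n : ℕ) (b y : A) :
    D^[n] (b * y) = ∑ ij ∈ Finset.HasAntidiagonal.antidiagonal n,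
      n.choose ij.1 • (D^[ij.1] b * D^[ij.2] y) := by
  induction n with
  | zero => simp
  | succ n ih =>
    rw [Finset.sum_antidiagonal_choose_succ_nsmul (fun i j => D^[i] b * D^[j] y) n]
    rw [Function.iterate_succ_apply', ih, D_sum hDlin]
    have : ∀ ij ∈ Finset.HasAntidiagonal.antidiagonal n,
        D (n.choose ij.1 • (D^[ij.1] b * D^[ij.2] y)) =
        n.choose ij.1 • (D^[ij.1] b * D^[ij.2 + 1] y)
          + n.choose ij.1 • (D^[ij.1 + 1] b * D^[ij.2] y) := by
      intro ij _
      rw [D_nsmul hDlin, hLeib, smul_add, Function.iterate_succ_apply',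
        Function.iterate_succ_apply']
    rw [Finset.sum_congr rfl this, Finset.sum_add_distrib]
    congr 1
    refine Finset.sum_congr rfl fun ij hij => ?_
    rw [n.choose_symm_of_eq_add (Finset.HasAntidiagonal.mem_antidiagonal.1 hij).symm]

lemma iter_leibniz' (hDlin : IsLinearMap k D)
    (hLeib : ∀ a b : A, D (a * b) = a * D b + D a * b) (n : ℕ) (b y : A) :
    D^[n] (b * y) = ∑ m ∈ Finset.range (n + 1), n.choose m • (D^[n - m] b * D^[m] y) := by
  rw [iter_leibniz hDlin hLeib]
  rw [← Finset.Nat.sum_antidiagonal_eq_sum_range_succ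
    (fun i j => n.choose i • (D^[j] b * D^[i] y)) n]
  rw [← Finset.Nat.sum_antidiagonal_swap (f :=
    fun ij => n.choose ij.1 • (D^[ij.2] b * D^[ij.1] y))]
  refine Finset.sum_congr rfl fun ij hij => ?_
  have h := Finset.HasAntidiagonal.mem_antidiagonal.1 hij
  simp only [Prod.fst_swap, Prod.snd_swap]
  rw [n.choose_symm_of_eq_add h.symm]

end Aux

section Aux2

variable {k A : Type*} [Field k] [CharZero k] [CommRing A] [Algebra k A]
variable {D : A → A}

lemma ann_of_mul_D_eq_zero (hDlin : IsLinearMap k D)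
    (hLeib : ∀ a b : A, D (a * b) = a * D b + D a * b)
    (hprime : IsPrimeDifferentialRing D) (hD : D ≠ 0) {c : A}
    (h : ∀ b : A, c * D b = 0) : c = 0 := by
  set J : Ideal A := Ideal.span (Set.range D) with hJ
  have hJdiff : IsDifferentialIdeal D J := by
    intro a ha
    induction ha using Submodule.span_induction with
    | mem x hx => obtain ⟨b, rfl⟩ := hx; exact Ideal.subset_span ⟨D b, rfl⟩
    | zero => rw [D_zero hDlin]; exact J.zero_mem
    | add x y hx hy ihx ihy => rw [hDlin.map_add]; exact J.add_mem ihx ihy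
    | smul r x hx ihx =>
        rw [smul_eq_mul, hLeib]
        exact J.add_mem (Ideal.mul_mem_left _ _ ihx) (Ideal.mul_mem_left _ _ hx)
  have hIdiff : IsDifferentialIdeal D J.annihilator := by
    intro x hx
    rw [Submodule.mem_annihilator] at hx ⊢
    intro j hj
    have h1 : x * j = 0 := hx j hj
    have h2 : x * D j = 0 := hx _ (hJdiff j hj)
    have h3 := hLeib x j
    rw [h1, D_zero hDlin, h2, zero_add] at h3
    rw [smul_eq_mul, ← h3]
  have hIJ : J.annihilator * J = ⊥ := by
    rw [eq_bot_iff, Ideal.mul_le]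
    intro i hi j hj
    rw [Ideal.mem_bot]
    simpa using (Submodule.mem_annihilator.1 hi) j hj
  have hJne : J ≠ ⊥ := by
    obtain ⟨b, hb⟩ : ∃ b, D b ≠ 0 := by
      by_contra hall
      push_neg at hall
      exact hD (funext hall)
    intro hbot
    apply hb
    have : D b ∈ J := Ideal.subset_span ⟨b, rfl⟩
    rwa [hbot, Ideal.mem_bot] at this
  have hIbot : J.annihilator = ⊥ := by
    by_contra hne
    exact hprime _ _ hIdiff hJdiff hne hJne hIJ
  have hc : c ∈ J.annihilator := by
    rw [Submodule.mem_annihilator]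
    intro j hj
    rw [smul_eq_mul]
    induction hj using Submodule.span_induction with
    | mem x hx => obtain ⟨b, rfl⟩ := hx; exact h b
    | zero => exact mul_zero c
    | add x y hx hy ihx ihy => rw [mul_add, ihx, ihy, add_zero]
    | smul r x hx ihx => rw [smul_eq_mul, ← mul_assoc, mul_comm c r, mul_assoc, ihx, mul_zero]
  rwa [hIbot, Ideal.mem_bot] at hc

lemma nsmul_cancel (k : Type*) [Field k] [CharZero k] {A : Type*} [CommRing A] [Algebra k A]
    {m : ℕ} (hm : m ≠ 0) {x : A} (hx : m • x = 0) : x = 0 := by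
  have h1 : ((m : ℕ) : k) • x = 0 := by rw [Nat.cast_smul_eq_nsmul]; exact hx
  have hmk : ((m : ℕ) : k) ≠ 0 := Nat.cast_ne_zero.2 hm
  have := congrArg (fun z => (((m : ℕ) : k))⁻¹ • z) h1
  simpa [smul_smul, inv_mul_cancel₀ hmk] using this

lemma op_vanish (hDlin : IsLinearMap k D)
    (hLeib : ∀ a b : A, D (a * b) = a * D b + D a * b)
    (hprime : IsPrimeDifferentialRing D) (hD : D ≠ 0) :
    ∀ (N : ℕ) (c : ℕ → A), (∀ y : A, ∑ j ∈ Finset.range (N + 1), c j * D^[j] y = 0) →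
      ∀ j ≤ N, c j = 0 := by
  intro N
  induction N with
  | zero =>
    intro c h j hj
    interval_cases j
    simpa using h 1
  | succ N ih =>
    intro c h
    have htop : c (N + 1) = 0 := by
      have hvan : ∀ b y : A, ∑ m ∈ Finset.range (N + 1),
          (∑ j ∈ Finset.range (N + 2),
            if m < j then c j * (j.choose m • D^[j - m] b) else 0) * D^[m] y = 0 := by
        intro b y
        have expand : ∀ j ∈ Finset.range (N + 2),
            (∑ m ∈ Finset.range (N + 1),
              (if m < j then c j * (j.choose m • D^[j - m] b) else 0) * D^[m] y)
            = c j * D^[j] (b * y) - c j * (b * D^[j] y) := by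
          intro j hj
          rw [Finset.mem_range] at hj
          have hsub : ∑ m ∈ Finset.range (N + 1),
              (if m < j then c j * (j.choose m • D^[j - m] b) else 0) * D^[m] y
              = ∑ m ∈ Finset.range j,
              (if m < j then c j * (j.choose m • D^[j - m] b) else 0) * D^[m] y := by
            refine (Finset.sum_subset (Finset.range_subset_range.2 (by omega)) ?_).symm
            intro m _ hm
            rw [Finset.mem_range, not_lt] at hm
            rw [if_neg (by omega), zero_mul]
          rw [hsub]
          have : ∀ m ∈ Finset.range j,
              (if m < j then c j * (j.choose m • D^[j - m] b) else 0) * D^[m] y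
              = c j * (j.choose m • (D^[j - m] b * D^[m] y)) := by
            intro m hm
            rw [Finset.mem_range] at hm
            rw [if_pos hm, mul_smul_comm, mul_smul_comm, smul_mul_assoc, mul_assoc]
          rw [Finset.sum_congr rfl this, ← Finset.mul_sum]
          have hlb := iter_leibniz' hDlin hLeib j b y
          rw [Finset.sum_range_succ, Nat.choose_self, Nat.sub_self,
            Function.iterate_zero_apply, one_smul] at hlb
          rw [eq_sub_iff_add_eq, ← mul_add, ← hlb]
        calc ∑ m ∈ Finset.range (N + 1),
            (∑ j ∈ Finset.range (N + 2),
              if m < j then c j * (j.choose m • D^[j - m] b) else 0) * D^[m] y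
            = ∑ m ∈ Finset.range (N + 1), ∑ j ∈ Finset.range (N + 2),
              (if m < j then c j * (j.choose m • D^[j - m] b) else 0) * D^[m] y := by
              refine Finset.sum_congr rfl fun m _ => ?_
              rw [Finset.sum_mul]
          _ = ∑ j ∈ Finset.range (N + 2), ∑ m ∈ Finset.range (N + 1),
              (if m < j then c j * (j.choose m • D^[j - m] b) else 0) * D^[m] y :=
              Finset.sum_comm
          _ = ∑ j ∈ Finset.range (N + 2), (c j * D^[j] (b * y) - c j * (b * D^[j] y)) :=
              Finset.sum_congr rfl expand
          _ = (∑ j ∈ Finset.range (N + 2), c j * D^[j] (b * y))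
              - ∑ j ∈ Finset.range (N + 2), c j * (b * D^[j] y) := Finset.sum_sub_distrib _ _
          _ = 0 - b * ∑ j ∈ Finset.range (N + 2), c j * D^[j] y := by
              rw [h (b * y)]
              congr 1
              rw [Finset.mul_sum]
              exact Finset.sum_congr rfl fun j _ => by ring
          _ = 0 := by rw [h y, mul_zero, sub_zero]
      have hdb : ∀ b : A, c (N + 1) * D b = 0 := by
        intro b
        have hdN : (∑ j ∈ Finset.range (N + 2),
            if N < j then c j * (j.choose N • D^[j - N] b) else 0) = 0 :=
          ih (fun m => ∑ j ∈ Finset.range (N + 2),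
            if m < j then c j * (j.choose m • D^[j - m] b) else 0) (hvan b) N le_rfl
        have hsingle : (∑ j ∈ Finset.range (N + 2),
            if N < j then c j * (j.choose N • D^[j - N] b) else 0)
            = c (N + 1) * ((N + 1).choose N • D^[1] b) := by
          rw [Finset.sum_eq_single (N + 1)]
          · have h1 : N + 1 - N = 1 := by omega
            rw [if_pos (by omega), h1]
          · intro j hj hne
            rw [Finset.mem_range] at hj
            rw [if_neg (by omega)]
          · intro hmem
            exact absurd (Finset.self_mem_range_succ (N + 1)) hmem
        rw [hsingle] at hdN
        have : (N + 1) • (c (N + 1) * D b) = 0 := by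
          rw [← hdN, Nat.choose_succ_self_right, Function.iterate_one, mul_smul_comm]
        exact nsmul_cancel k (Nat.succ_ne_zero N) this
      exact ann_of_mul_D_eq_zero hDlin hLeib hprime hD hdb
    intro j hj
    rcases Nat.lt_succ_iff_lt_or_eq.1 (Nat.lt_succ_of_le hj) with hlt | heq
    · refine ih c (fun y => ?_) j (by omega)
      have := h y
      rwa [Finset.sum_range_succ, htop, zero_mul, add_zero] at this
    · rw [heq]; exact htop

end Aux2

section Aux3

variable {k A : Type*} [Field k] [CharZero k] [CommRing A] [Algebra k A]
variable {D : A → A}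

lemma sum_piFinset_succ {M : Type*} [AddCommMonoid M] {n N : ℕ} (f : (Fin (n + 1) → ℕ) → M) :
    ∑ φ ∈ Fintype.piFinset (fun _ : Fin (n + 1) => Finset.range (N + 1)), f φ =
      ∑ j ∈ Finset.range (N + 1),
        ∑ ψ ∈ Fintype.piFinset (fun _ : Fin n => Finset.range (N + 1)), f (Fin.cons j ψ) := by
  rw [← Finset.sum_product']
  refine Finset.sum_bij (fun φ _ => (φ 0, Fin.tail φ)) ?_ ?_ ?_ ?_
  · intro φ hφ
    rw [Fintype.mem_piFinset] at hφ
    rw [Finset.mem_product]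
    exact ⟨hφ 0, Fintype.mem_piFinset.2 fun i => hφ i.succ⟩
  · intro φ₁ h₁ φ₂ h₂ heq
    rw [Prod.mk.injEq] at heq
    funext i
    refine Fin.cases heq.1 (fun i' => congrFun heq.2 i') i
  · intro q hq
    rw [Finset.mem_product] at hq
    refine ⟨Fin.cons q.1 q.2, Fintype.mem_piFinset.2 fun i => ?_, ?_⟩
    · refine Fin.cases ?_ ?_ i
      · rw [Fin.cons_zero]; exact hq.1
      · intro i'; rw [Fin.cons_succ]; exact Fintype.mem_piFinset.1 hq.2 i'
    · simp only [Fin.cons_zero, Fin.tail_cons]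
  · intro φ hφ
    rw [Fin.cons_self_tail]

lemma multi_vanish (hDlin : IsLinearMap k D)
    (hLeib : ∀ a b : A, D (a * b) = a * D b + D a * b)
    (hprime : IsPrimeDifferentialRing D) (hD : D ≠ 0) :
    ∀ (n N : ℕ) (c : (Fin n → ℕ) → A),
      (∀ a : Fin n → A, ∑ φ ∈ Fintype.piFinset (fun _ : Fin n => Finset.range (N + 1)),
          c φ * ∏ i, D^[φ i] (a i) = 0) →
      ∀ φ : Fin n → ℕ, (∀ i, φ i ≤ N) → c φ = 0 := by
  intro n
  induction n with
  | zero =>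
    intro N c h φ _
    have h0 := h (fun i => i.elim0)
    rw [Fintype.piFinset_of_isEmpty] at h0
    simp only [Finset.univ_unique, Finset.sum_singleton, Finset.univ_eq_empty,
      Finset.prod_empty, mul_one] at h0
    exact (congrArg c (Subsingleton.elim φ _)).trans h0
  | succ n ih =>
    intro N c h φ hφ
    have key : ∀ (a' : Fin n → A), ∀ j ≤ N,
        (∑ ψ ∈ Fintype.piFinset (fun _ : Fin n => Finset.range (N + 1)),
          c (Fin.cons j ψ) * ∏ i, D^[ψ i] (a' i)) = 0 := by
      intro a'
      refine op_vanish hDlin hLeib hprime hD N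
        (fun j => ∑ ψ ∈ Fintype.piFinset (fun _ : Fin n => Finset.range (N + 1)),
          c (Fin.cons j ψ) * ∏ i, D^[ψ i] (a' i)) (fun y => ?_)
      have hy := h (Fin.cons y a')
      rw [sum_piFinset_succ] at hy
      rw [← hy]
      refine Finset.sum_congr rfl fun j _ => ?_
      rw [Finset.sum_mul]
      refine Finset.sum_congr rfl fun ψ _ => ?_
      rw [mul_assoc]
      congr 1
      rw [Fin.prod_univ_succ]
      simp only [Fin.cons_zero, Fin.cons_succ]
      rw [mul_comm]
    have hc := ih N (fun ψ => c (Fin.cons (φ 0) ψ))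
      (fun a' => key a' (φ 0) (hφ 0)) (Fin.tail φ) (fun i => hφ i.succ)
    have h2 : c (Fin.cons (φ 0) (Fin.tail φ)) = 0 := hc
    rwa [Fin.cons_self_tail] at h2

end Aux3

section Aux4

variable {k A : Type*} [Field k] [CharZero k] [CommRing A] [Algebra k A]

/-- The multilinear monomial attached to a choice of derivative orders. -/
noncomputable def Mono {n : ℕ} (φ : Fin n → ℕ) : (Fin n × ℕ) →₀ ℕ :=
  ∑ i : Fin n, Finsupp.single (i, φ i) 1

lemma Mono_apply {n : ℕ} (φ : Fin n → ℕ) (a : Fin n) (b : ℕ) :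
    Mono φ (a, b) = if φ a = b then 1 else 0 := by
  classical
  rw [Mono, Finset.sum_apply']
  rw [Finset.sum_eq_single a]
  · rw [Finsupp.single_apply]
    by_cases hb : φ a = b
    · rw [if_pos (by rw [hb]), if_pos hb]
    · rw [if_neg (by simp [Prod.ext_iff]; exact fun h => hb h), if_neg hb]
  · intro i _ hne
    rw [Finsupp.single_apply, if_neg (by simp [Prod.ext_iff]; exact fun h => absurd h hne)]
  · intro h
    exact absurd (Finset.mem_univ a) h

lemma Mono_inj {n : ℕ} {φ φ' : Fin n → ℕ} (h : Mono φ = Mono φ') : φ = φ' := by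
  funext i
  have h1 := DFunLike.congr_fun h (i, φ i)
  rw [Mono_apply, Mono_apply, if_pos rfl] at h1
  by_contra hne
  rw [if_neg (fun hh => hne hh.symm)] at h1
  exact one_ne_zero h1

lemma Mono_prod {n : ℕ} (φ : Fin n → ℕ) (f : Fin n × ℕ → A) :
    (Mono φ).prod (fun v e => f v ^ e) = ∏ i, f (i, φ i) := by
  classical
  rw [Mono, ← Finsupp.prod_finset_sum_index (fun v => pow_zero (f v))
    (fun v a b => pow_add (f v) a b)]
  refine Finset.prod_congr rfl fun i _ => ?_
  simp [Finsupp.prod_single_index]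

lemma nat_sum_eq_one {β : Type*} {s : Finset β} {f : β → ℕ} (h : ∑ v ∈ s, f v = 1) :
    ∃ v ∈ s, f v = 1 ∧ ∀ u ∈ s, u ≠ v → f u = 0 := by
  classical
  obtain ⟨v, hv, hfv⟩ := Finset.exists_ne_zero_of_sum_ne_zero (h ▸ one_ne_zero)
  have h1 : f v ≤ 1 := h ▸ Finset.single_le_sum (fun _ _ => Nat.zero_le _) hv
  refine ⟨v, hv, by omega, fun u hu hne => ?_⟩
  have hsub : {u, v} ⊆ s := by
    intro x hx
    rcases Finset.mem_insert.1 hx with rfl | hx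
    · exact hu
    · rwa [Finset.mem_singleton.1 hx]
  have h2 : f u + f v ≤ 1 := by
    have := Finset.sum_le_sum_of_subset (f := f) hsub
    rwa [Finset.sum_pair hne, h] at this
  omega

lemma exists_rep {n : ℕ} {m : (Fin n × ℕ) →₀ ℕ}
    (hm : ∀ i : Fin n, (m.sum fun v e => if v.1 = i then e else 0) = 1) :
    ∃ φ : Fin n → ℕ, m = Mono φ := by
  classical
  have key : ∀ i : Fin n, ∃ v, v ∈ m.support ∧ v.1 = i ∧ m v = 1 ∧
      ∀ u ∈ m.support, u.1 = i → u ≠ v → m u = 0 := by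
    intro i
    have hs : ∑ v ∈ m.support.filter (fun v => v.1 = i), m v = 1 := by
      rw [Finset.sum_filter]
      exact hm i
    obtain ⟨v, hv, hv1, hrest⟩ := nat_sum_eq_one hs
    rw [Finset.mem_filter] at hv
    exact ⟨v, hv.1, hv.2, hv1,
      fun u hu hui hne => hrest u (Finset.mem_filter.2 ⟨hu, hui⟩) hne⟩
  choose v hvmem hv1 hv2 hother using key
  refine ⟨fun i => (v i).2, ?_⟩
  ext w
  obtain ⟨a, b⟩ := w
  rw [Mono_apply]
  have hva : v a = (a, (v a).2) := Prod.ext (hv1 a) rfl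
  by_cases hb : (v a).2 = b
  · rw [if_pos hb]
    have : (a, b) = v a := by rw [hva, hb]
    have h2 := hv2 a
    rw [← this] at h2
    exact h2
  · rw [if_neg hb]
    by_cases hsup : (a, b) ∈ m.support
    · exact hother a (a, b) hsup rfl (fun hh => hb (by rw [← hh])) 
    · exact Finsupp.notMem_support_iff.1 hsup

end Aux4
/-- A differential polynomial (written as a polynomial over `A` in the variables
`X (i, j) = x_i^{(j)}`) is multilinear if each of its monomials has total degree
exactly `1` in the variables attached to each `x_i`. -/
def IsMultilinearDiffPoly {A : Type*} [CommRing A] {n : ℕ}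
    (p : MvPolynomial (Fin n × ℕ) A) : Prop :=
  ∀ m ∈ p.support, ∀ i : Fin n, (m.sum fun v e => if v.1 = i then e else 0) = 1

/-- a nonzero multilinear differential polynomial over a prime commutative
differential algebra over a field of characteristic zero with nonzero derivation does
not vanish identically. -/
theorem multilinear_diffPoly_not_identity {k A : Type*} [Field k] [CharZero k] [CommRing A]
    [Algebra k A]
    (D : A → A) (hDlin : IsLinearMap k D)
    (hLeib : ∀ a b : A, D (a * b) = a * D b + D a * b)
    (hprime : IsPrimeDifferentialRing D)
    (hD : D ≠ 0)
    (n : ℕ) (p : MvPolynomial (Fin n × ℕ) A)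
    (hp : p ≠ 0) (hmult : IsMultilinearDiffPoly p) :
    ∃ a : Fin n → A,
      MvPolynomial.eval (fun v : Fin n × ℕ => D^[v.2] (a v.1)) p ≠ 0 := by
  classical
  by_contra hcon
  push_neg at hcon
  set N : ℕ := p.support.sup (fun m => m.support.sup fun v => v.2) with hN
  set c : (Fin n → ℕ) → A := fun φ => p.coeff (Mono φ) with hc
  have hrep : ∀ m ∈ p.support, ∃ φ : Fin n → ℕ, (∀ i, φ i ≤ N) ∧ m = Mono φ := by
    intro m hm
    obtain ⟨φ, hφ⟩ := exists_rep (fun i => hmult m hm i)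
    refine ⟨φ, fun i => ?_, hφ⟩
    have hmem : ((i, φ i) : Fin n × ℕ) ∈ m.support := by
      rw [Finsupp.mem_support_iff, hφ, Mono_apply]
      simp
    calc φ i ≤ m.support.sup (fun v : Fin n × ℕ => v.2) :=
          Finset.le_sup (f := fun v : Fin n × ℕ => v.2) hmem
      _ ≤ N := Finset.le_sup (f := fun m : (Fin n × ℕ) →₀ ℕ => m.support.sup fun v => v.2) hm
  have heval : ∀ a : Fin n → A,
      ∑ φ ∈ Fintype.piFinset (fun _ : Fin n => Finset.range (N + 1)),
        c φ * ∏ i, D^[φ i] (a i) = 0 := by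
    intro a
    rw [← hcon a]
    set f : Fin n × ℕ → A := fun v => D^[v.2] (a v.1) with hf
    calc ∑ φ ∈ Fintype.piFinset (fun _ : Fin n => Finset.range (N + 1)),
          c φ * ∏ i, D^[φ i] (a i)
        = ∑ φ ∈ (Fintype.piFinset (fun _ : Fin n => Finset.range (N + 1))).filter
            (fun φ => Mono φ ∈ p.support), c φ * ∏ i, D^[φ i] (a i) := by
          refine (Finset.sum_filter_of_ne fun φ _ hne => ?_).symm
          rw [MvPolynomial.mem_support_iff]
          intro hz
          exact hne (by simp only [hc]; rw [hz, zero_mul])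
      _ = ∑ m ∈ p.support, p.coeff m * ∏ v ∈ m.support, f v ^ m v := by
          refine Finset.sum_bij (fun φ _ => Mono φ) ?_ ?_ ?_ ?_
          · intro φ hφ
            exact (Finset.mem_filter.1 hφ).2
          · intro φ1 h1 φ2 h2 heq
            exact Mono_inj heq
          · intro m hm
            obtain ⟨φ, hφle, rfl⟩ := hrep m hm
            exact ⟨φ, Finset.mem_filter.2 ⟨Fintype.mem_piFinset.2 fun i =>
              Finset.mem_range.2 (Nat.lt_succ_of_le (hφle i)), hm⟩, rfl⟩
          · intro φ hφ
            have : (∏ v ∈ (Mono φ).support, f v ^ (Mono φ) v) = ∏ i, D^[φ i] (a i) := by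
              rw [← Mono_prod φ f]
              rfl
            rw [this, hc]
      _ = MvPolynomial.eval f p := (MvPolynomial.eval_eq f p).symm
  have hvanish := multi_vanish hDlin hLeib hprime hD n N c heval
  obtain ⟨m, hm⟩ := Finset.nonempty_iff_ne_empty.2
    (fun hemp => hp (MvPolynomial.support_eq_empty.1 hemp))
  obtain ⟨φ, hφle, rfl⟩ := hrep m hm
  have hz : c φ = 0 := hvanish φ hφle
  rw [hc] at hz
  exact (MvPolynomial.mem_support_iff.1 hm) hz
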